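/- For the bilinear site-wise selected-class likelihood p_sel(η, γ) = T + U·η + V·γ + W·η·γ and total likelihood P(η,γ,ρ) = ρ·p_sel(η,γ) + (1−ρ)·p_neut, the mixed partial derivative ∂²(ln P)/∂η∂γ equals (W·p_neut·ρ(1−ρ) + ρ²(T·W − U·V)) / P², wherever P > 0. -/

import Mathlib

lemma inner_deriv (T U V W pn ρ η γ₀ : ℝ)
    (h : ρ * (T + U * η + V * γ₀ + W * η * γ₀) + (1 - ρ) * pn ≠ 0) :
    deriv (fun γ =>
        Real.log (ρ * (T + U * η + V * γ + W * η * γ) + (1 - ρ) * pn)) γ₀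
      = ρ * (V + W * η) /
        (ρ * (T + U * η + V * γ₀ + W * η * γ₀) + (1 - ρ) * pn) := by
  have hd : HasDerivAt (fun γ : ℝ =>
      ρ * (T + U * η + V * γ + W * η * γ) + (1 - ρ) * pn)
      (ρ * (V + W * η)) γ₀ := by
    have := ((hasDerivAt_id γ₀).const_mul (V) |>.add
      ((hasDerivAt_id γ₀).const_mul (W * η)))
    have h2 : HasDerivAt (fun γ : ℝ => T + U * η + V * γ + W * η * γ)
        (V + W * η) γ₀ := by
      have : HasDerivAt (fun γ : ℝ => T + U * η + V * γ + W * η * γ)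
          (0 + V * 1 + W * η * 1) γ₀ := by
        exact ((hasDerivAt_const γ₀ (T + U * η)).add
          ((hasDerivAt_id γ₀).const_mul V)).add
          ((hasDerivAt_id γ₀).const_mul (W * η)) |>.congr_deriv (by ring) |>.congr_deriv rfl
      simpa using this.congr_deriv (by ring)
    simpa using (h2.const_mul ρ).add_const ((1 - ρ) * pn)
  exact (hd.log h).deriv

/-- for the bilinear site-wise selected-class likelihood
`p_sel(η,γ) = T + U·η + V·γ + W·η·γ` and total likelihood
`P(η,γ) = ρ·p_sel(η,γ) + (1−ρ)·p_neut`, the mixed partial derivative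
`∂²(ln P)/∂η∂γ` equals
`(W·p_neut·ρ(1−ρ) + ρ²(T·W − U·V)) / P²` wherever `P > 0`. -/
theorem hessian_mixed_partial (T U V W pn ρ : ℝ)
    (hρ0 : 0 ≤ ρ) (hρ1 : ρ ≤ 1) (η₀ γ₀ : ℝ)
    (hP : 0 < ρ * (T + U * η₀ + V * γ₀ + W * η₀ * γ₀) + (1 - ρ) * pn) :
    deriv (fun η => deriv (fun γ =>
        Real.log (ρ * (T + U * η + V * γ + W * η * γ) + (1 - ρ) * pn)) γ₀) η₀
      = (W * pn * ρ * (1 - ρ) + ρ ^ 2 * (T * W - U * V))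
        / (ρ * (T + U * η₀ + V * γ₀ + W * η₀ * γ₀) + (1 - ρ) * pn) ^ 2 := by
  set Q : ℝ → ℝ := fun η => ρ * (T + U * η + V * γ₀ + W * η * γ₀) + (1 - ρ) * pn with hQ
  have hcont : Continuous Q := by fun_prop
  have hopen : ∀ᶠ η in nhds η₀, 0 < Q η :=
    (isOpen_lt continuous_const hcont).mem_nhds hP
  have heq : (fun η => deriv (fun γ =>
        Real.log (ρ * (T + U * η + V * γ + W * η * γ) + (1 - ρ) * pn)) γ₀)
      =ᶠ[nhds η₀] fun η => ρ * (V + W * η) / Q η := by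
    filter_upwards [hopen] with η hη
    exact inner_deriv T U V W pn ρ η γ₀ (ne_of_gt hη)
  rw [heq.deriv_eq]
  have hnum : HasDerivAt (fun η : ℝ => ρ * (V + W * η)) (ρ * W) η₀ := by
    have : HasDerivAt (fun η : ℝ => V + W * η) (0 + W * 1) η₀ :=
      (hasDerivAt_const η₀ V).add ((hasDerivAt_id η₀).const_mul W)
    simpa using this.const_mul ρ
  have hden : HasDerivAt Q (ρ * (U + W * γ₀)) η₀ := by
    have : HasDerivAt (fun η : ℝ => T + U * η + V * γ₀ + W * η * γ₀)
        (U + W * γ₀) η₀ := by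
      have h1 : HasDerivAt (fun η : ℝ => T + U * η) (0 + U * 1) η₀ :=
        (hasDerivAt_const η₀ T).add ((hasDerivAt_id η₀).const_mul U)
      have h2 : HasDerivAt (fun η : ℝ => W * η * γ₀) (W * γ₀) η₀ := by
        simpa [mul_comm, mul_assoc, mul_left_comm] using
          ((hasDerivAt_id η₀).const_mul (W * γ₀)).congr_deriv (by ring)
      exact ((h1.add_const (V * γ₀)).add h2).congr_deriv (by simp)
    simpa [hQ] using (this.const_mul ρ).add_const ((1 - ρ) * pn)
  have hQ0 : Q η₀ ≠ 0 := ne_of_gt hP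
  have := (hnum.div hden hQ0).deriv
  rw [show (fun η => ρ * (V + W * η) / Q η) = (fun η => ρ * (V + W * η)) / Q from rfl, this]
  have hQη : Q η₀ = ρ * (T + U * η₀ + V * γ₀ + W * η₀ * γ₀) + (1 - ρ) * pn := rfl
  rw [hQη]
  field_simp
  ring
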